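/- Let T(n,d) be the rooted tree of depth n (n ≥ 1, d ≥ 3) in which the root has degree d, every internal non-root vertex has degree d, and every leaf is at distance exactly n from the root. Then the distinguishing number of T(n,d) equals d. -/

import Mathlib

/-- A coloring `c` of the vertices of `G` is distinguishing if the only
color-preserving automorphism of `G` is the identity. -/
def SimpleGraph.IsDistinguishing {V α : Type*} (G : SimpleGraph V) (c : V → α) : Prop :=
  ∀ φ : G ≃g G, (∀ v, c (φ v) = c v) → ∀ v, φ v = v

/-- The distinguishing number of a graph: the least `k` such that some
`k`-coloring of the vertices is preserved only by the identity automorphism. -/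
noncomputable def SimpleGraph.distinguishingNumber {V : Type*} (G : SimpleGraph V) : ℕ :=
  sInf {k : ℕ | ∃ c : V → Fin k, G.IsDistinguishing c}


open SimpleGraph Finset Walk
set_option linter.unusedSectionVars false
namespace Tnd
variable {V : Type*} {G : SimpleGraph V} {r : V}

lemma path_length_eq_dist (ht : G.IsTree) {a b : V} (p : G.Walk a b) (hp : p.IsPath) :
    p.length = G.dist a b := by
  obtain ⟨q, hq, hlen⟩ := p.reachable.exists_path_of_dist
  rw [(ht.existsUnique_path a b).unique hp hq, hlen]

lemma exists_adj_dist (hc : G.Connected) {a w : V} {m : ℕ} (h : G.dist a w = m + 1) :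
    ∃ y, G.Adj y w ∧ G.dist a y = m := by
  obtain ⟨p, hp, hlen⟩ := Connected.exists_path_of_dist hc a w
  have hnil : ¬ p.reverse.Nil := by
    rw [not_nil_iff_lt_length, length_reverse, hlen, h]; omega
  obtain ⟨y, hadj, q, hq⟩ := not_nil_iff.mp hnil
  have hql : q.length = m := by
    have := congrArg Walk.length hq
    rw [length_reverse, hlen, h] at this
    simpa using this.symm
  refine ⟨y, hadj.symm, le_antisymm ?_ ?_⟩
  · calc G.dist a y = G.dist y a := dist_comm ..
    _ ≤ q.length := dist_le q
    _ = m := hql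
  · have h1 : G.dist a w ≤ G.dist a y + G.dist y w := hc.dist_triangle
    have h2 : G.dist y w ≤ 1 := by
      rw [dist_comm]; exact (dist_eq_one_iff_adj.mpr hadj).le
    omega

lemma adj_dist (ht : G.IsTree) {u v : V} (h : G.Adj u v) :
    G.dist r v = G.dist r u + 1 ∨ G.dist r u = G.dist r v + 1 := by
  classical
  obtain ⟨p, hp, hlen⟩ := Connected.exists_path_of_dist ht.isConnected r u
  by_cases hv : v ∈ p.support
  · right
    have h1 : (p.takeUntil v hv).length = G.dist r v :=
      path_length_eq_dist ht _ (hp.takeUntil hv)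
    have h2 : (p.dropUntil v hv).length = G.dist v u :=
      path_length_eq_dist ht _ (hp.dropUntil hv)
    have h3 : (p.takeUntil v hv).length + (p.dropUntil v hv).length = p.length := by
      rw [← length_append, take_spec]
    have h4 : G.dist v u = 1 := dist_eq_one_iff_adj.mpr h.symm
    omega
  · left
    have hcp : (p.concat h).IsPath := by
      rw [isPath_def, support_concat, List.nodup_append']
      refine ⟨hp.support_nodup, List.nodup_singleton v, ?_⟩
      intro a ha hb
      rw [List.mem_singleton] at hb
      exact hv (hb ▸ ha)
    have := path_length_eq_dist ht _ hcp
    rw [length_concat, hlen] at this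
    omega

lemma parent_unique (ht : G.IsTree) {m : ℕ} {v y₁ y₂ : V}
    (h1 : G.Adj y₁ v) (h2 : G.Adj y₂ v) (d1 : G.dist r y₁ = m) (d2 : G.dist r y₂ = m)
    (dv : G.dist r v = m + 1) : y₁ = y₂ := by
  obtain ⟨p1, hp1, hl1⟩ := Connected.exists_path_of_dist ht.isConnected r y₁
  obtain ⟨p2, hp2, hl2⟩ := Connected.exists_path_of_dist ht.isConnected r y₂
  have hw1 : (p1.concat h1).IsPath := by
    apply Walk.isPath_of_length_eq_dist
    rw [length_concat, hl1, d1, dv]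
  have hw2 : (p2.concat h2).IsPath := by
    apply Walk.isPath_of_length_eq_dist
    rw [length_concat, hl2, d2, dv]
  have heq : p1.concat h1 = p2.concat h2 := (ht.existsUnique_path r v).unique hw1 hw2
  obtain ⟨hv, -⟩ := Walk.concat_inj heq
  exact hv

/-- the parent of a vertex w.r.t. root `r` -/
noncomputable def par (G : SimpleGraph V) (r v : V) : V :=
  letI := Classical.propDecidable
  if h : ∃ y, G.Adj y v ∧ G.dist r y + 1 = G.dist r v then h.choose else v

variable [Fintype V] [DecidableRel G.Adj] {n d : ℕ}

/-- the children of a vertex, w.r.t. root `r` -/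
noncomputable def chl (G : SimpleGraph V) [Fintype V] [DecidableRel G.Adj] (r p : V) :
    Finset V :=
  Finset.univ.filter fun x => G.Adj p x ∧ G.dist r x = G.dist r p + 1

structure Ctx {V : Type*} [Fintype V] (G : SimpleGraph V) [DecidableRel G.Adj] (n d : ℕ) (r : V) : Prop where
  hn : 1 ≤ n
  hd : 3 ≤ d
  htree : G.IsTree
  hroot : G.degree r = d
  hdeg : ∀ v, G.degree v = 1 ∨ G.degree v = d
  hleaf : ∀ v, G.degree v = 1 → G.dist r v = n

lemma Ctx.conn (hx : Ctx G n d r) : G.Connected := hx.htree.isConnected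

@[simp] lemma mem_chl {p x : V} : x ∈ chl G r p ↔ G.Adj p x ∧ G.dist r x = G.dist r p + 1 := by
  simp [chl]

lemma chl_dist {p x : V} (h : x ∈ chl G r p) : G.dist r x = G.dist r p + 1 :=
  (mem_chl.mp h).2

lemma par_spec (hx : Ctx G n d r) {v : V} (hv : v ≠ r) :
    G.Adj (par G r v) v ∧ G.dist r (par G r v) + 1 = G.dist r v := by
  have hpos : 0 < G.dist r v := hx.conn.pos_dist_of_ne (Ne.symm hv)
  obtain ⟨m, hm⟩ : ∃ m, G.dist r v = m + 1 := ⟨G.dist r v - 1, by omega⟩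
  obtain ⟨y, hy1, hy2⟩ := exists_adj_dist hx.conn hm
  have h : ∃ y, G.Adj y v ∧ G.dist r y + 1 = G.dist r v := ⟨y, hy1, by omega⟩
  rw [par]
  rw [dif_pos h]
  exact h.choose_spec

lemma par_eq (hx : Ctx G n d r) {v y : V} (hadj : G.Adj y v)
    (hdy : G.dist r y + 1 = G.dist r v) : par G r v = y := by
  have hv : v ≠ r := by
    intro h; subst h; simp [dist_self] at hdy
  obtain ⟨h1, h2⟩ := par_spec hx hv
  exact parent_unique (r := r) (m := G.dist r v - 1) hx.htree h1 hadj (by omega) (by omega)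
    (by omega)

lemma mem_chl_iff_par (hx : Ctx G n d r) {q v : V} :
    v ∈ chl G r q ↔ v ≠ r ∧ par G r v = q := by
  constructor
  · intro h
    rw [mem_chl] at h
    have hv : v ≠ r := by
      intro he; subst he
      have := h.2; simp [dist_self] at this
    exact ⟨hv, par_eq hx h.1 (by omega)⟩
  · rintro ⟨hv, rfl⟩
    obtain ⟨h1, h2⟩ := par_spec hx hv
    exact mem_chl.mpr ⟨h1, by omega⟩

lemma chl_root_eq (hx : Ctx G n d r) : chl G r r = G.neighborFinset r := by
  ext x
  rw [mem_chl, mem_neighborFinset]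
  refine ⟨fun h => h.1, fun h => ⟨h, ?_⟩⟩
  rcases adj_dist (r := r) hx.htree h with h' | h'
  · exact h'
  · exfalso
    rw [dist_self] at h'
    omega

lemma card_chl_root (hx : Ctx G n d r) : (chl G r r).card = d := by
  rw [chl_root_eq hx, card_neighborFinset_eq_degree, hx.hroot]

lemma neighbor_eq_chl [DecidableEq V] (hx : Ctx G n d r) {v : V} (hv : v ≠ r) :
    G.neighborFinset v = insert (par G r v) (chl G r v) := by
  classical
  obtain ⟨hp1, hp2⟩ := par_spec hx hv
  ext x
  rw [mem_neighborFinset, Finset.mem_insert, mem_chl]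
  constructor
  · intro h
    rcases adj_dist (r := r) hx.htree h with h' | h'
    · exact Or.inr ⟨h, h'⟩
    · left
      exact (parent_unique (r := r) (m := G.dist r x) hx.htree hp1 h.symm (by omega) rfl
        (by omega)).symm
  · rintro (rfl | ⟨h, -⟩)
    · exact hp1.symm
    · exact h

lemma card_chl_nonroot (hx : Ctx G n d r) {v : V} (hv : v ≠ r) :
    (chl G r v).card = G.degree v - 1 := by
  classical
  have hp2 := (par_spec hx hv).2
  have hnm : par G r v ∉ chl G r v := by
    rw [mem_chl]
    rintro ⟨-, h⟩
    omega
  have hcard : G.degree v = (chl G r v).card + 1 := by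
    rw [← card_neighborFinset_eq_degree, neighbor_eq_chl hx hv,
      Finset.card_insert_of_notMem hnm]
  omega

lemma chl_card_internal (hx : Ctx G n d r) {v : V} (hdv : G.degree v = d) :
    d - 1 ≤ (chl G r v).card ∧ (chl G r v).card ≤ d := by
  by_cases hv : v = r
  · subst hv; rw [card_chl_root hx]; omega
  · rw [card_chl_nonroot hx hv, hdv]; omega

lemma exists_leaf (hx : Ctx G n d r) (v : V) :
    ∃ ℓ, G.degree ℓ = 1 ∧ G.dist v ℓ + G.dist r v ≤ n := by
  -- strong induction on `Fintype.card V - G.dist r v`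
  obtain ⟨N, hN⟩ : ∃ N, N = Fintype.card V := ⟨_, rfl⟩
  have hdistlt : ∀ w : V, G.dist r w < Fintype.card V := by
    intro w
    obtain ⟨p, hp, hlen⟩ := Connected.exists_path_of_dist hx.conn r w
    rw [← hlen]; exact hp.length_lt
  have main : ∀ t, ∀ v : V, Fintype.card V - G.dist r v ≤ t →
      ∃ ℓ, G.degree ℓ = 1 ∧ G.dist v ℓ + G.dist r v ≤ n := by
    intro t
    induction t with
    | zero => intro v hv; exact absurd (hdistlt v) (by omega)
    | succ t ih =>
      intro v hv
      rcases hx.hdeg v with h1 | h1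
      · exact ⟨v, h1, by rw [dist_self, hx.hleaf v h1]; omega⟩
      · have hne : (chl G r v).Nonempty := by
          rw [← Finset.card_pos]
          have := chl_card_internal hx h1
          have := hx.hd
          omega
        obtain ⟨w, hw⟩ := hne
        rw [mem_chl] at hw
        obtain ⟨ℓ, hℓ1, hℓ2⟩ := ih w (by omega)
        refine ⟨ℓ, hℓ1, ?_⟩
        have h3 : G.dist v ℓ ≤ G.dist v w + G.dist w ℓ := hx.conn.dist_triangle
        have h4 : G.dist v w = 1 := dist_eq_one_iff_adj.mpr hw.1
        omega
  exact main (Fintype.card V) v (by omega)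

lemma dist_le_n (hx : Ctx G n d r) (v : V) : G.dist r v ≤ n := by
  obtain ⟨ℓ, -, h⟩ := exists_leaf hx v
  omega

lemma degree_eq_one_iff (hx : Ctx G n d r) {v : V} : G.degree v = 1 ↔ G.dist r v = n := by
  refine ⟨hx.hleaf v, fun h => ?_⟩
  rcases hx.hdeg v with h1 | h1
  · exact h1
  · exfalso
    have hne : (chl G r v).Nonempty := by
      rw [← Finset.card_pos]
      have := chl_card_internal hx h1
      have := hx.hd
      omega
    obtain ⟨w, hw⟩ := hne
    have := chl_dist hw
    have := dist_le_n hx w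
    omega

lemma degree_eq_d_of_lt (hx : Ctx G n d r) {v : V} (h : G.dist r v < n) : G.degree v = d := by
  rcases hx.hdeg v with h1 | h1
  · exact absurd ((degree_eq_one_iff hx).mp h1) (by omega)
  · exact h1

lemma chl_card_le (hx : Ctx G n d r) (v : V) : (chl G r v).card ≤ d := by
  by_cases hv : v = r
  · subst hv; exact (card_chl_root hx).le
  · rw [card_chl_nonroot hx hv]
    rcases hx.hdeg v with h1 | h1 <;> rw [h1] <;> omega

lemma iso_dist (hx : Ctx G n d r) (φ : G ≃g G) (a b : V) :
    G.dist (φ a) (φ b) = G.dist a b := by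
  have aux : ∀ (ψ : G ≃g G) (a b : V), G.dist (ψ a) (ψ b) ≤ G.dist a b := by
    intro ψ a b
    obtain ⟨p, -, hlen⟩ := Connected.exists_path_of_dist hx.conn a b
    calc G.dist (ψ a) (ψ b) ≤ (p.map ψ.toHom).length := dist_le _
    _ = p.length := length_map _ _
    _ = G.dist a b := hlen
  refine le_antisymm (aux φ a b) ?_
  have := aux φ.symm (φ a) (φ b)
  simpa using this

lemma iso_degree (φ : G ≃g G) (a : V) : G.degree (φ a) = G.degree a := by
  classical
  rw [← card_neighborSet_eq_degree, ← card_neighborSet_eq_degree]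
  exact (Fintype.card_congr (φ.mapNeighborSet a)).symm

lemma aut_fixes_root (hx : Ctx G n d r) (φ : G ≃g G) : φ r = r := by
  by_contra hs
  have hpos : 0 < G.dist r (φ r) := hx.conn.pos_dist_of_ne (fun h => hs h.symm)
  obtain ⟨ℓ, hℓ1, hℓ2⟩ := exists_leaf hx (φ r)
  -- `ℓ = φ ℓ'` for a leaf `ℓ'`, so `dist (φ r) ℓ = n`
  have hdeg' : G.degree (φ.symm ℓ) = 1 := by
    rw [← hℓ1, ← iso_degree φ (φ.symm ℓ), φ.apply_symm_apply]
  have hd' : G.dist r (φ.symm ℓ) = n := hx.hleaf _ hdeg'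
  have hkey : G.dist (φ r) ℓ = n := by
    have h2 : G.dist (φ r) (φ (φ.symm ℓ)) = n := by rw [iso_dist hx φ, hd']
    simpa using h2
  omega

lemma upper (hx : Ctx G n d r) : ∃ c : V → Fin d, G.IsDistinguishing c := by
  classical
  have hd3 := hx.hd
  -- rank of a vertex among its siblings
  let e : V ≃ Fin (Fintype.card V) := Fintype.equivFin V
  let rk : V → ℕ := fun v => ((chl G r (par G r v)).filter (fun x => e x < e v)).card
  have hrk_lt : ∀ v, v ≠ r → rk v < d := by
    intro v hv
    have hmem : v ∈ chl G r (par G r v) := (mem_chl_iff_par hx).mpr ⟨hv, rfl⟩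
    have hsub : (chl G r (par G r v)).filter (fun x => e x < e v) ⊆
        (chl G r (par G r v)).erase v := by
      intro x hxm
      rw [Finset.mem_filter] at hxm
      refine Finset.mem_erase.mpr ⟨?_, hxm.1⟩
      intro h; subst h; exact lt_irrefl _ hxm.2
    have h1 : ((chl G r (par G r v)).filter (fun x => e x < e v)).card ≤
        (chl G r (par G r v)).card - 1 := by
      have := Finset.card_le_card hsub
      rw [Finset.card_erase_of_mem hmem] at this
      exact this
    have h2 := chl_card_le hx (par G r v)
    simp only [rk]
    omega
  let c : V → Fin d := fun v => if h : v = r then ⟨0, by omega⟩ else ⟨rk v, hrk_lt v h⟩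
  -- `c` is injective on the children of any vertex
  have hinj : ∀ q : V, ∀ x ∈ chl G r q, ∀ y ∈ chl G r q, c x = c y → x = y := by
    intro q x hxm y hym hcxy
    obtain ⟨hxr, hxp⟩ := (mem_chl_iff_par hx).mp hxm
    obtain ⟨hyr, hyp⟩ := (mem_chl_iff_par hx).mp hym
    have hrkeq : rk x = rk y := by
      simp only [c, dif_neg hxr, dif_neg hyr, Fin.mk.injEq] at hcxy
      exact hcxy
    by_contra hne
    have key : ∀ a b : V, a ∈ chl G r q → b ∈ chl G r q → par G r a = q → par G r b = q →
        e a < e b → rk a < rk b := by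
      intro a b ham hbm hap hbp hab
      have hsub : (chl G r (par G r a)).filter (fun x => e x < e a) ⊆
          (chl G r (par G r b)).filter (fun x => e x < e b) := by
        rw [hap, hbp]
        intro z hz
        rw [Finset.mem_filter] at hz ⊢
        exact ⟨hz.1, lt_trans hz.2 hab⟩
      have hmem : a ∈ (chl G r (par G r b)).filter (fun x => e x < e b) := by
        rw [hbp, Finset.mem_filter]; exact ⟨ham, hab⟩
      have hnmem : a ∉ (chl G r (par G r a)).filter (fun x => e x < e a) := by
        rw [Finset.mem_filter]
        rintro ⟨-, h⟩; exact lt_irrefl _ h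
      exact Finset.card_lt_card (Finset.ssubset_iff_of_subset hsub |>.mpr ⟨a, hmem, hnmem⟩)
    rcases lt_trichotomy (e x) (e y) with h | h | h
    · exact absurd hrkeq (by have := key x y hxm hym hxp hyp h; omega)
    · exact hne (e.injective h)
    · exact absurd hrkeq (by have := key y x hym hxm hyp hxp h; omega)
  refine ⟨c, fun φ hc => ?_⟩
  have hfr : φ r = r := aut_fixes_root hx φ
  have key : ∀ m : ℕ, ∀ v, G.dist r v = m → φ v = v := by
    intro m
    induction m with
    | zero =>
      intro v hv
      have : r = v := hx.conn.dist_eq_zero_iff.mp hv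
      subst this; exact hfr
    | succ m ih =>
      intro v hv
      have hvr : v ≠ r := by
        intro h; subst h; rw [dist_self] at hv; omega
      obtain ⟨hp1, hp2⟩ := par_spec hx hvr
      have hq : G.dist r (par G r v) = m := by omega
      have hφq : φ (par G r v) = par G r v := ih _ hq
      have hadj : G.Adj (par G r v) (φ v) := by
        have := φ.map_rel_iff.mpr hp1
        rwa [hφq] at this
      have hdist : G.dist r (φ v) = m + 1 := by
        rw [← hfr, iso_dist hx φ, hv]
      have hmem1 : φ v ∈ chl G r (par G r v) := mem_chl.mpr ⟨hadj, by omega⟩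
      have hmem2 : v ∈ chl G r (par G r v) := (mem_chl_iff_par hx).mpr ⟨hvr, rfl⟩
      exact hinj _ _ hmem1 _ hmem2 (hc v)
  exact fun v => key _ v rfl

/-- color-signature of the subtree below a vertex, with fuel -/
def sigF {V : Type*} (children : V → Finset V) (col : V → ℕ) : ℕ → V → ℕ
  | 0, v => col v
  | h+1, v => Nat.pair (col v) (Encodable.encode ((children v).image (sigF children col h)))

/-- subtree-swapping map: swaps `u`'s subtree with `v`'s subtree, matching by signature -/
noncomputable def matchF {V : Type*} (par : V → V) (children : V → Finset V) (sg : V → ℕ)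
    (u v : V) : ℕ → V → V
  | 0, w => w
  | m+1, w =>
    letI := Classical.decEq V
    letI := fun p => Classical.propDecidable p
    if w = u then v
    else if w = v then u
    else if h : ∃ x, x ∈ children (matchF par children sg u v m (par w)) ∧ sg x = sg w ∧
        matchF par children sg u v m (par w) ≠ par w then h.choose
    else w

lemma matchF_succ {V : Type*} (par : V → V) (children : V → Finset V) (sg : V → ℕ)
    (u v : V) (m : ℕ) (w : V) :
    matchF par children sg u v (m+1) w =
      letI := Classical.decEq V
      letI := fun p => Classical.propDecidable p
      if w = u then v
      else if w = v then u
      else if h : ∃ x, x ∈ children (matchF par children sg u v m (par w)) ∧ sg x = sg w ∧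
          matchF par children sg u v m (par w) ≠ par w then h.choose
      else w := rfl

lemma matchF_comm {V : Type*} (par : V → V) (children : V → Finset V) (sg : V → ℕ)
    {u v : V} (huv : u ≠ v) : ∀ m w, matchF par children sg u v m w =
      matchF par children sg v u m w := by
  intro m
  induction m with
  | zero => intro w; rfl
  | succ m ih =>
    have hfun : matchF par children sg u v m = matchF par children sg v u m := funext ih
    intro w
    by_cases h1 : w = u
    · subst h1
      simp [matchF, huv, Ne.symm huv, hfun]
    · by_cases h2 : w = v
      · subst h2
        simp [matchF, huv, Ne.symm huv, hfun]
      · simp only [matchF, if_neg h1, if_neg h2]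
        rw [hfun]

/-- `a` is an ancestor of `w` (w.r.t. root `r`) -/
def Anc (G : SimpleGraph V) (r a w : V) : Prop :=
  G.dist a w + G.dist r a = G.dist r w

lemma anc_self : Anc G r a a := by simp [Anc, dist_self]

lemma anc_dist_le {a w : V} (h : Anc G r a w) : G.dist r a ≤ G.dist r w := by
  rw [Anc] at h; omega

lemma anc_child (hx : Ctx G n d r) {a q x : V} (h : Anc G r a q) (hc : x ∈ chl G r q) :
    Anc G r a x := by
  rw [mem_chl] at hc
  rw [Anc] at h ⊢
  have h1 : G.dist a x ≤ G.dist a q + G.dist q x := hx.conn.dist_triangle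
  have h2 : G.dist q x = 1 := dist_eq_one_iff_adj.mpr hc.1
  have h3 : G.dist r x ≤ G.dist r a + G.dist a x := hx.conn.dist_triangle
  omega

lemma anc_par (hx : Ctx G n d r) {a w : V} (h : Anc G r a w) (hw : w ≠ a) :
    Anc G r a (par G r w) ∧ G.dist r a < G.dist r w ∧ w ≠ r := by
  have hpos : 0 < G.dist a w := hx.conn.pos_dist_of_ne (Ne.symm hw)
  rw [Anc] at h
  have hwr : w ≠ r := by
    intro he; subst he; rw [dist_self] at h; omega
  obtain ⟨y, hy1, hy2⟩ := exists_adj_dist hx.conn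
    (show G.dist a w = (G.dist a w - 1) + 1 by omega)
  have h1 : G.dist r y ≤ G.dist r a + G.dist a y := hx.conn.dist_triangle
  have h2 : G.dist r w ≤ G.dist r y + G.dist y w := hx.conn.dist_triangle
  have h3 : G.dist y w = 1 := dist_eq_one_iff_adj.mpr hy1
  have hpy : par G r w = y := par_eq hx hy1 (by omega)
  refine ⟨?_, by omega, hwr⟩
  rw [Anc, hpy]
  omega

lemma anc_eq (hx : Ctx G n d r) {a b w : V} (ha : Anc G r a w) (hb : Anc G r b w)
    (hab : G.dist r a = G.dist r b) : a = b := by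
  have main : ∀ m, ∀ w, G.dist r w = m → Anc G r a w → Anc G r b w → a = b := by
    intro m
    induction m using Nat.strong_induction_on with
    | _ m ih =>
      intro w hm ha hb
      by_cases hcase : G.dist r w = G.dist r a
      · have h1 : G.dist a w = 0 := by rw [Anc] at ha; omega
        have h2 : G.dist b w = 0 := by rw [Anc] at hb; omega
        rw [hx.conn.dist_eq_zero_iff.mp h1, hx.conn.dist_eq_zero_iff.mp h2]
      · have hlt : G.dist r a < G.dist r w := lt_of_le_of_ne (anc_dist_le ha) (Ne.symm hcase)
        have hwa : w ≠ a := by intro he; subst he; omega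
        have hwb : w ≠ b := by
          intro he; subst he
          rw [Anc, dist_self] at hb; omega
        obtain ⟨ha', -, hwr⟩ := anc_par hx ha hwa
        obtain ⟨hb', -, -⟩ := anc_par hx hb hwb
        have hp2 := (par_spec hx hwr).2
        exact ih (G.dist r (par G r w)) (by omega) _ rfl ha' hb'
  exact main _ w rfl ha hb

lemma lower (hx : Ctx G n d r) {k : ℕ} (hk : k < d) (c : V → Fin k) :
    ¬ G.IsDistinguishing c := by
  classical
  intro hdist
  set col : V → ℕ := fun v => (c v).val with hcol
  set sg : V → ℕ := fun v => sigF (chl G r) col (n - G.dist r v) v with hsgdef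
  have sg_leaf : ∀ v, G.dist r v = n → sg v = col v := by
    intro v hv
    rw [hsgdef]
    simp only [hv, Nat.sub_self]
    rfl
  have sg_unfold : ∀ v, G.dist r v < n →
      sg v = Nat.pair (col v) (Encodable.encode ((chl G r v).image sg)) := by
    intro v hv
    obtain ⟨t, ht⟩ : ∃ t, n - G.dist r v = t + 1 := ⟨n - G.dist r v - 1, by omega⟩
    have himg : (chl G r v).image (sigF (chl G r) col t) = (chl G r v).image sg := by
      apply Finset.image_congr
      intro x hxm
      have hdx : G.dist r x = G.dist r v + 1 := chl_dist hxm
      have : n - G.dist r x = t := by omega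
      rw [hsgdef]
      simp only [this]
    calc sg v = sigF (chl G r) col (t + 1) v := by rw [hsgdef]; simp only [ht]
    _ = Nat.pair (col v) (Encodable.encode ((chl G r v).image (sigF (chl G r) col t))) := rfl
    _ = _ := by rw [himg]
  -- Step 1: signatures cannot be injective on all sibling sets
  have hnSD : ¬ (∀ q : V, ∀ x ∈ chl G r q, ∀ y ∈ chl G r q, sg x = sg y → x = y) := by
    intro hSD
    set Lv : ℕ → Finset ℕ :=
      fun j => ((univ : Finset V).filter (fun v => G.dist r v = j)).image sg with hLv
    have hLvmem : ∀ v : V, sg v ∈ Lv (G.dist r v) := fun v =>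
      Finset.mem_image_of_mem sg (Finset.mem_filter.mpr ⟨Finset.mem_univ v, rfl⟩)
    have hcol_lt : ∀ v : V, col v < k := fun v => (c v).isLt
    have claim : ∀ t, t ≤ n → (Lv (n - t)).card ≤ k := by
      intro t
      induction t with
      | zero =>
        intro _
        have hsub : Lv (n - 0) ⊆ Finset.range k := by
          intro s hs
          rw [hLv] at hs
          obtain ⟨v, hv, rfl⟩ := Finset.mem_image.mp hs
          rw [Finset.mem_filter] at hv
          rw [sg_leaf v (by simpa using hv.2)]
          exact Finset.mem_range.mpr (hcol_lt v)
        simpa using Finset.card_le_card hsub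
      | succ t ih =>
        intro ht
        have ih' := ih (by omega)
        set E := Encodable.encode (Lv (n - t)) with hE
        have hkey : ∀ v : V, G.dist r v = n - (t+1) → sg v = Nat.pair (col v) E := by
          intro v hv
          have hvn : G.dist r v < n := by omega
          have hint : G.degree v = d := degree_eq_d_of_lt hx hvn
          have hchl_sub : (chl G r v).image sg ⊆ Lv (n - t) := by
            intro s hs
            obtain ⟨x, hxm, rfl⟩ := Finset.mem_image.mp hs
            have : G.dist r x = n - t := by have := chl_dist hxm; omega
            exact this ▸ hLvmem x
          have hcard_img : ((chl G r v).image sg).card = (chl G r v).card :=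
            Finset.card_image_of_injOn (fun x hxm y hym => hSD v x hxm y hym)
          have h1 : d - 1 ≤ (chl G r v).card := (chl_card_internal hx hint).1
          have heq : (chl G r v).image sg = Lv (n - t) :=
            Finset.eq_of_subset_of_card_le hchl_sub
              (by have := Finset.card_le_card hchl_sub; omega)
          rw [sg_unfold v hvn, heq, hE]
        have hsub : Lv (n - (t+1)) ⊆ (Finset.range k).image (fun a => Nat.pair a E) := by
          intro s hs
          rw [hLv] at hs
          obtain ⟨v, hv, rfl⟩ := Finset.mem_image.mp hs
          rw [Finset.mem_filter] at hv
          rw [hkey v (by simpa using hv.2)]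
          exact Finset.mem_image_of_mem _ (Finset.mem_range.mpr (hcol_lt v))
        calc (Lv (n - (t+1))).card ≤ ((Finset.range k).image (fun a => Nat.pair a E)).card :=
              Finset.card_le_card hsub
        _ ≤ (Finset.range k).card := Finset.card_image_le
        _ = k := Finset.card_range k
    -- contradiction at the root
    have hroot_img : ((chl G r r).image sg).card = d := by
      rw [Finset.card_image_of_injOn (fun x hxm y hym => hSD r x hxm y hym), card_chl_root hx]
    have hsub : (chl G r r).image sg ⊆ Lv 1 := by
      intro s hs
      obtain ⟨x, hxm, rfl⟩ := Finset.mem_image.mp hs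
      have : G.dist r x = 1 := by have := chl_dist hxm; rw [dist_self] at this; omega
      exact this ▸ hLvmem x
    have hc1 := claim (n - 1) (by omega)
    have hn1 : n - (n - 1) = 1 := by have := hx.hn; omega
    rw [hn1] at hc1
    have := Finset.card_le_card hsub
    omega
  push_neg at hnSD
  obtain ⟨q0, x0, hx0, y0, hy0, hsgxy0, hne0⟩ := hnSD
  -- take a violating pair of maximal depth
  set P : ℕ → Prop := fun j => ∃ q x y, x ∈ chl G r q ∧ y ∈ chl G r q ∧ sg x = sg y ∧
    x ≠ y ∧ G.dist r x = j with hP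
  have hP0 : P (G.dist r x0) := ⟨q0, x0, y0, hx0, hy0, hsgxy0, hne0, rfl⟩
  set jm := Nat.findGreatest P n with hjm
  obtain ⟨p, u, v, hu, hv, hsguv, huv, hju⟩ :=
    Nat.findGreatest_spec (dist_le_n hx x0) hP0
  have hjv : G.dist r v = jm := by
    have h1 := chl_dist hu
    have h2 := chl_dist hv
    omega
  have hjm1 : 1 ≤ jm := by have := chl_dist hu; omega
  have hjmn : jm ≤ n := by have := dist_le_n hx u; omega
  have SD' : ∀ q x y, x ∈ chl G r q → y ∈ chl G r q → jm < G.dist r x → sg x = sg y →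
      x = y := by
    intro q x y hxq hyq hgt hsgq
    by_contra hne
    have hPx : P (G.dist r x) := ⟨q, x, y, hxq, hyq, hsgq, hne, rfl⟩
    have := Nat.le_findGreatest (dist_le_n hx x) hPx
    omega
  -- the subtree-swap invariant, for a generic violating pair (a, b) of children of p
  have B : ∀ a b : V, a ∈ chl G r p → b ∈ chl G r p → a ≠ b → sg a = sg b →
      ∀ m, ∀ w, G.dist r w = m →
      ((¬ Anc G r a w ∧ ¬ Anc G r b w) → matchF (par G r) (chl G r) sg a b m w = w) ∧
      (Anc G r a w →
        G.dist r (matchF (par G r) (chl G r) sg a b m w) = m ∧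
        Anc G r b (matchF (par G r) (chl G r) sg a b m w) ∧
        sg (matchF (par G r) (chl G r) sg a b m w) = sg w ∧
        matchF (par G r) (chl G r) sg a b m
          (matchF (par G r) (chl G r) sg a b m w) = w ∧
        (w = a → matchF (par G r) (chl G r) sg a b m w = b) ∧
        (w ≠ a → matchF (par G r) (chl G r) sg a b m w ∈
          chl G r (matchF (par G r) (chl G r) sg a b (m-1) (par G r w)))) := by
    intro a b hap hbp hab hsgab
    have hda : G.dist r a = jm := by
      have h1 := chl_dist hap; have h2 := chl_dist hu; omega
    have hdb : G.dist r b = jm := by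
      have h1 := chl_dist hbp; have h2 := chl_dist hu; omega
    intro m
    induction m with
    | zero =>
      intro w hw
      exact ⟨fun _ => rfl, fun hanc => absurd (anc_dist_le hanc) (by omega)⟩
    | succ m ih =>
      intro w hw
      have hwn : m + 1 ≤ n := hw ▸ dist_le_n hx w
      constructor
      · rintro ⟨hna, hnb⟩
        have hwa : w ≠ a := fun h => hna (h ▸ anc_self)
        have hwb : w ≠ b := fun h => hnb (h ▸ anc_self)
        have hwr : w ≠ r := by
          intro h; subst h; rw [dist_self] at hw; omega
        have hwc : w ∈ chl G r (par G r w) := (mem_chl_iff_par hx).mpr ⟨hwr, rfl⟩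
        have hpw : G.dist r (par G r w) = m := by
          have := (par_spec hx hwr).2; omega
        have hnap : ¬ Anc G r a (par G r w) := fun h => hna (anc_child hx h hwc)
        have hnbp : ¬ Anc G r b (par G r w) := fun h => hnb (anc_child hx h hwc)
        have hfix := (ih (par G r w) hpw).1 ⟨hnap, hnbp⟩
        rw [matchF_succ, if_neg hwa, if_neg hwb, dif_neg]
        rw [hfix]
        push_neg
        intro x _ _
        rfl
      · intro hanca
        have hwb : w ≠ b := by
          intro h; subst h
          have h0 : G.dist a w = 0 := by rw [Anc] at hanca; omega
          exact hab (hx.conn.dist_eq_zero_iff.mp h0)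
        by_cases hwa : w = a
        · subst hwa
          have hfb : matchF (par G r) (chl G r) sg w b (m+1) w = b := by
            rw [matchF_succ, if_pos rfl]
          refine ⟨by rw [hfb]; omega, by rw [hfb]; exact anc_self, by rw [hfb]; exact hsgab.symm,
            ?_, fun _ => hfb, fun h => absurd rfl h⟩
          rw [hfb, matchF_succ, if_neg (fun h => hab h.symm), if_pos rfl]
        · -- `w` strictly below `a`
          have hdaw : 0 < G.dist a w := hx.conn.pos_dist_of_ne (Ne.symm hwa)
          have hgt : jm < m + 1 := by rw [Anc] at hanca; omega
          obtain ⟨hancp, -, hwr⟩ := anc_par hx hanca hwa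
          have hpw : G.dist r (par G r w) = m := by
            have := (par_spec hx hwr).2; omega
          obtain ⟨ihd, ihb, ihsg, ihinv, -, -⟩ := (ih (par G r w) hpw).2 hancp
          have hqne : matchF (par G r) (chl G r) sg a b m (par G r w) ≠ par G r w := by
            intro h
            exact hab (anc_eq hx hancp (h ▸ ihb) (by omega))
          have hpwn : G.dist r (par G r w) < n := by omega
          have hqn : G.dist r (matchF (par G r) (chl G r) sg a b m (par G r w)) < n := by
            rw [ihd]; omega
          have himg : (chl G r (matchF (par G r) (chl G r) sg a b m (par G r w))).image sg =
              (chl G r (par G r w)).image sg := by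
            have h1 := sg_unfold _ hqn
            have h2 := sg_unfold _ hpwn
            have h3 := Nat.pair_eq_pair.mp ((h1.symm.trans ihsg).trans h2)
            exact Encodable.encode_injective h3.2
          have hwchl : w ∈ chl G r (par G r w) := (mem_chl_iff_par hx).mpr ⟨hwr, rfl⟩
          have hmemw : sg w ∈ (chl G r (matchF (par G r) (chl G r) sg a b m (par G r w))).image
              sg := by
            rw [himg]; exact Finset.mem_image_of_mem _ hwchl
          obtain ⟨x, hxq, hsgx⟩ := Finset.mem_image.mp hmemw
          have hEx : ∃ x, x ∈ chl G r (matchF (par G r) (chl G r) sg a b m (par G r w)) ∧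
              sg x = sg w ∧ matchF (par G r) (chl G r) sg a b m (par G r w) ≠ par G r w :=
            ⟨x, hxq, hsgx, hqne⟩
          have hfw : matchF (par G r) (chl G r) sg a b (m+1) w = hEx.choose := by
            rw [matchF_succ, if_neg hwa, if_neg hwb, dif_pos hEx]
          obtain ⟨hc1, hc2, -⟩ := hEx.choose_spec
          have hdy : G.dist r hEx.choose = m + 1 := by
            have := chl_dist hc1; omega
          refine ⟨by rw [hfw]; exact hdy, by rw [hfw]; exact anc_child hx ihb hc1,
            by rw [hfw]; exact hc2, ?_, fun h => absurd h hwa, fun _ => ?_⟩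
          · -- involution
            rw [hfw]
            have hya : hEx.choose ≠ a := by
              intro h
              have hanb : Anc G r b hEx.choose := anc_child hx ihb hc1
              rw [h, Anc] at hanb
              have h0 : G.dist b a = 0 := by omega
              exact hab (hx.conn.dist_eq_zero_iff.mp h0).symm
            have hyb : hEx.choose ≠ b := by
              intro h; rw [h] at hdy; omega
            have hpy : par G r hEx.choose = matchF (par G r) (chl G r) sg a b m (par G r w) :=
              ((mem_chl_iff_par hx).mp hc1).2
            have hEx2 : ∃ z, z ∈ chl G r (matchF (par G r) (chl G r) sg a b m
                  (par G r hEx.choose)) ∧ sg z = sg hEx.choose ∧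
                matchF (par G r) (chl G r) sg a b m (par G r hEx.choose) ≠
                  par G r hEx.choose := by
              rw [hpy, ihinv]
              exact ⟨w, hwchl, hc2.symm, fun h => hqne h.symm⟩
            have hfy : matchF (par G r) (chl G r) sg a b (m+1) hEx.choose = hEx2.choose := by
              rw [matchF_succ, if_neg hya, if_neg hyb, dif_pos hEx2]
            rw [hfy]
            have hval : matchF (par G r) (chl G r) sg a b m (par G r hEx.choose) =
                par G r w := by
              rw [hpy]; exact ihinv
            obtain ⟨hz1, hz2, -⟩ := hEx2.choose_spec
            set z := hEx2.choose with hzdef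
            clear_value z
            rw [hval] at hz1
            have hdz : jm < G.dist r z := by have := chl_dist hz1; omega
            exact SD' (par G r w) z w hz1 hwchl hdz (hz2.trans hc2)
          · -- child structure
            rw [hfw]
            simp only [Nat.add_sub_cancel]
            exact hc1
  -- assemble the automorphism swapping the subtrees of `u` and `v`
  set f := matchF (par G r) (chl G r) sg u v with hf
  set F : V → V := fun w => f (G.dist r w) w with hF
  have Bu := B u v hu hv huv hsguv
  have Bv := B v u hv hu (Ne.symm huv) hsguv.symm
  have hcomm : ∀ m w, matchF (par G r) (chl G r) sg v u m w = f m w := fun m w =>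
    (matchF_comm (par G r) (chl G r) sg huv m w).symm
  have hFu : F u = v := ((Bu (G.dist r u) u rfl).2 anc_self).2.2.2.2.1 rfl
  have hFv : F v = u := by
    have h0 := ((Bv (G.dist r v) v rfl).2 anc_self).2.2.2.2.1 rfl
    rw [hcomm] at h0
    exact h0
  have hFdist : ∀ w, G.dist r (F w) = G.dist r w := by
    intro w
    by_cases h1 : Anc G r u w
    · exact ((Bu (G.dist r w) w rfl).2 h1).1
    · by_cases h2 : Anc G r v w
      · have h0 := ((Bv (G.dist r w) w rfl).2 h2).1
        rwa [hcomm] at h0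
      · have hW : F w = w := (Bu (G.dist r w) w rfl).1 ⟨h1, h2⟩
        rw [hW]
  have hFinv : ∀ w, F (F w) = w := by
    intro w
    by_cases h1 : Anc G r u w
    · have h4 := ((Bu (G.dist r w) w rfl).2 h1).2.2.2.1
      calc F (F w) = f (G.dist r (F w)) (F w) := rfl
      _ = f (G.dist r w) (F w) := by rw [hFdist w]
      _ = w := h4
    · by_cases h2 : Anc G r v w
      · have h4 := ((Bv (G.dist r w) w rfl).2 h2).2.2.2.1
        simp only [hcomm] at h4
        calc F (F w) = f (G.dist r (F w)) (F w) := rfl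
        _ = f (G.dist r w) (F w) := by rw [hFdist w]
        _ = w := h4
      · have hW : F w = w := (Bu (G.dist r w) w rfl).1 ⟨h1, h2⟩
        rw [hW, hW]
  have hfixp : F p = p := by
    have hdp : G.dist r p + 1 = jm := by have := chl_dist hu; omega
    have h1 : ¬ Anc G r u p := fun h => by have := anc_dist_le h; omega
    have h2 : ¬ Anc G r v p := fun h => by have := anc_dist_le h; omega
    exact (Bu (G.dist r p) p rfl).1 ⟨h1, h2⟩
  have hup : ∀ w, w ≠ r → G.Adj (F (par G r w)) (F w) := by
    intro w hwr
    have hpw := (par_spec hx hwr).2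
    by_cases h1 : w = u
    · rw [h1, hFu, show par G r u = p from ((mem_chl_iff_par hx).mp hu).2, hfixp]
      exact (mem_chl.mp hv).1
    · by_cases h2 : w = v
      · rw [h2, hFv, show par G r v = p from ((mem_chl_iff_par hx).mp hv).2, hfixp]
        exact (mem_chl.mp hu).1
      · have hpd : G.dist r (par G r w) = G.dist r w - 1 := by omega
        have e : F (par G r w) = f (G.dist r w - 1) (par G r w) := by
          show f (G.dist r (par G r w)) (par G r w) = _
          rw [hpd]
        by_cases h3 : Anc G r u w
        · have hmem := ((Bu (G.dist r w) w rfl).2 h3).2.2.2.2.2 h1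
          rw [e]
          exact (mem_chl.mp hmem).1
        · by_cases h4 : Anc G r v w
          · have hmem := ((Bv (G.dist r w) w rfl).2 h4).2.2.2.2.2 h2
            simp only [hcomm] at hmem
            rw [e]
            exact (mem_chl.mp hmem).1
          · have hwc : w ∈ chl G r (par G r w) := (mem_chl_iff_par hx).mpr ⟨hwr, rfl⟩
            have h5 : ¬ Anc G r u (par G r w) := fun h => h3 (anc_child hx h hwc)
            have h6 : ¬ Anc G r v (par G r w) := fun h => h4 (anc_child hx h hwc)
            have e1 : F w = w := (Bu (G.dist r w) w rfl).1 ⟨h3, h4⟩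
            have e2 : F (par G r w) = par G r w :=
              (Bu (G.dist r (par G r w)) (par G r w) rfl).1 ⟨h5, h6⟩
            rw [e1, e2]
            exact (par_spec hx hwr).1
  have hFadj : ∀ x y : V, G.Adj x y → G.Adj (F x) (F y) := by
    intro x y hadj
    rcases adj_dist (r := r) hx.htree hadj with h | h
    · have hyr : y ≠ r := by
        intro he; subst he; rw [dist_self] at h; omega
      have hpy : par G r y = x := par_eq hx hadj (by omega)
      have h2 := hup y hyr
      rwa [hpy] at h2
    · have hxr : x ≠ r := by
        intro he; subst he; rw [dist_self] at h; omega
      have hpx : par G r x = y := par_eq hx hadj.symm (by omega)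
      have h2 := hup x hxr
      rw [hpx] at h2
      exact h2.symm
  have hFcol : ∀ w, c (F w) = c w := by
    have key : ∀ w', sg (F w') = sg w' → c (F w') = c w' := by
      intro w' hsge
      have hd' := hFdist w'
      have hcoleq : col (F w') = col w' := by
        by_cases hn : G.dist r w' = n
        · rw [sg_leaf _ (by omega), sg_leaf _ hn] at hsge
          exact hsge
        · have hlt : G.dist r w' < n := by have := dist_le_n hx w'; omega
          rw [sg_unfold _ (by omega), sg_unfold _ hlt] at hsge
          exact (Nat.pair_eq_pair.mp hsge).1
      exact Fin.ext hcoleq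
    intro w
    by_cases h1 : Anc G r u w
    · exact key w ((Bu (G.dist r w) w rfl).2 h1).2.2.1
    · by_cases h2 : Anc G r v w
      · apply key w
        have h0 := ((Bv (G.dist r w) w rfl).2 h2).2.2.1
        rwa [hcomm] at h0
      · have hW : F w = w := (Bu (G.dist r w) w rfl).1 ⟨h1, h2⟩
        rw [hW]
  -- the automorphism
  have hmap : ∀ x y : V, G.Adj (F x) (F y) ↔ G.Adj x y := by
    intro x y
    constructor
    · intro h
      have h2 := hFadj (F x) (F y) h
      rwa [hFinv x, hFinv y] at h2
    · exact hFadj x y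
  let E : V ≃ V := ⟨F, F, hFinv, hFinv⟩
  let φ : G ≃g G := ⟨E, by intro a b; exact hmap a b⟩
  have hφ : ∀ w, φ w = F w := fun w => rfl
  have hfin := hdist φ (fun w => by rw [hφ]; exact hFcol w) u
  rw [hφ, hFu] at hfin
  exact huv hfin.symm

end Tnd

/-- the tree `T(n,d)` (every vertex of degree 1 or `d`, rooted at a
vertex of degree `d`, all leaves at distance exactly `n` from the root) has
distinguishing number `d`, for `n ≥ 1` and `d ≥ 3`. -/
theorem distinguishingNumber_Tnd {V : Type*} [Fintype V] (G : SimpleGraph V)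
    [DecidableRel G.Adj] (n d : ℕ) (hn : 1 ≤ n) (hd : 3 ≤ d)
    (htree : G.IsTree) (r : V)
    (hroot : G.degree r = d)
    (hdeg : ∀ v, G.degree v = 1 ∨ G.degree v = d)
    (hleaf : ∀ v, G.degree v = 1 → G.dist r v = n) :
    G.distinguishingNumber = d := by
  have hx : Tnd.Ctx G n d r := ⟨hn, hd, htree, hroot, hdeg, hleaf⟩
  obtain ⟨c, hc⟩ := Tnd.upper hx
  have hdS : d ∈ {k : ℕ | ∃ c : V → Fin k, G.IsDistinguishing c} := ⟨c, hc⟩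
  rw [SimpleGraph.distinguishingNumber]
  apply le_antisymm
  · exact Nat.sInf_le hdS
  · apply le_csInf ⟨d, hdS⟩
    intro b hb
    by_contra hlt
    push_neg at hlt
    obtain ⟨cb, hcb⟩ := hb
    exact Tnd.lower hx hlt cb hcb
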